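/- Let p be a prime, G a finite group, Q a p-subgroup of G, and P a Sylow p-subgroup of G that contains a Sylow p-subgroup of N_G(Q). Then every p-subgroup R of G containing Q·C_P(Q) is p-centric. -/

import Mathlib

open Subgroup

/-- A `p`-subgroup `Q` of `G` is `p`-centric if every `p`-element of `C_G(Q)` lies in
`Q`. -/
def IsPCentric (p : ℕ) {G : Type*} [Group G] (Q : Subgroup G) : Prop :=
  IsPGroup p Q ∧
    ∀ x ∈ Subgroup.centralizer (Q : Set G), (∃ k : ℕ, x ^ p ^ k = 1) → x ∈ Q

/-- If `C` is a normal subgroup of a finite group `N` and `S` any subgroup, then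
`[C : S ⊓ C]` divides `[N : S]`. -/
private lemma relindex_dvd_index_of_normal_aux {N : Type*} [Group N] [Finite N]
    (S C : Subgroup N) [C.Normal] : S.relIndex C ∣ S.index := by
  have h2 : S.relIndex C * C.index = (S ⊓ C).index := by
    have := Subgroup.relIndex_inf_mul_relIndex S C ⊤
    simpa using this
  have h3 : C.relIndex S * S.index = (S ⊓ C).index := by
    rw [← Subgroup.inf_relIndex_right C S, inf_comm C S]
    exact Subgroup.relIndex_mul_index inf_le_left
  have h4 : C.relIndex (S ⊔ C) = C.relIndex S := Subgroup.relIndex_sup_right S C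
  have h5 : C.relIndex S * (S ⊔ C).index = C.index := by
    rw [← h4]; exact Subgroup.relIndex_mul_index le_sup_right
  have hpos : 0 < C.relIndex S := Nat.pos_of_ne_zero (by
    rw [← h4]
    exact Subgroup.FiniteIndex.index_ne_zero (H := (C.subgroupOf (S ⊔ C))))
  refine ⟨(S ⊔ C).index, ?_⟩
  have key : C.relIndex S * (S.relIndex C * (S ⊔ C).index) = C.relIndex S * S.index := by
    calc C.relIndex S * (S.relIndex C * (S ⊔ C).index)
        = S.relIndex C * (C.relIndex S * (S ⊔ C).index) := by ring
      _ = S.relIndex C * C.index := by rw [h5]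
      _ = (S ⊓ C).index := h2
      _ = C.relIndex S * S.index := h3.symm
  exact (Nat.eq_of_mul_eq_mul_left hpos key).symm

/-- If `S` is a Sylow `p`-subgroup of a finite group `N` and `C` a normal subgroup, then
`S ⊓ C` is a maximal `p`-subgroup of `C`. -/
private lemma sylow_inf_le {N : Type*} [Group N] [Finite N] {p : ℕ} [Fact p.Prime]
    (S : Sylow p N) (C : Subgroup N) [C.Normal] {T : Subgroup N}
    (hT : IsPGroup p T) (hTC : T ≤ C) (hST : (S : Subgroup N) ⊓ C ≤ T) :
    T ≤ (S : Subgroup N) ⊓ C := by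
  haveI : Finite (Sylow p N) := inferInstance
  have hD : IsPGroup p (((S : Subgroup N) ⊓ C).subgroupOf C) := by
    rw [← Subgroup.comap_subtype]
    exact (S.2.to_inf_left).comap_of_injective C.subtype Subtype.coe_injective
  have hnd : ¬ p ∣ (((S : Subgroup N) ⊓ C).subgroupOf C).index := by
    intro h
    have h' : (((S : Subgroup N) ⊓ C).subgroupOf C).index
        = (S : Subgroup N).relIndex C := by
      rw [← Subgroup.inf_relIndex_right (S : Subgroup N) C]; rfl
    rw [h'] at h
    exact S.not_dvd_index (h.trans (relindex_dvd_index_of_normal_aux _ C))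
  have hT' : IsPGroup p (T.subgroupOf C) := by
    rw [← Subgroup.comap_subtype]
    exact hT.comap_of_injective C.subtype Subtype.coe_injective
  have hle : ((hD.toSylow hnd : Sylow p C) : Subgroup C) ≤ T.subgroupOf C := by
    rw [IsPGroup.toSylow_coe]
    intro g hg
    rw [Subgroup.mem_subgroupOf] at hg ⊢
    exact hST hg
  have hmax := (hD.toSylow hnd).3 hT' hle
  rw [IsPGroup.toSylow_coe] at hmax
  have : T.subgroupOf C = ((S : Subgroup N) ⊓ C).subgroupOf C := hmax
  calc T = T ⊓ C := (inf_eq_left.mpr hTC).symm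
    _ = (T.subgroupOf C).map C.subtype := (Subgroup.subgroupOf_map_subtype T C).symm
    _ = (((S : Subgroup N) ⊓ C).subgroupOf C).map C.subtype := by rw [this]
    _ = ((S : Subgroup N) ⊓ C) ⊓ C := Subgroup.subgroupOf_map_subtype _ C
    _ ≤ (S : Subgroup N) ⊓ C := inf_le_left

/-- Let `Q` be a `p`-subgroup of a finite group `G` and `P` a Sylow `p`-subgroup of `G`
containing a Sylow `p`-subgroup of `N_G(Q)`. Then every `p`-subgroup of `G` containing
`Q·C_P(Q)` is `p`-centric. -/
theorem pCentric_of_le (p : ℕ) (hp : p.Prime)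
    (G : Type*) [Group G] [Finite G] (Q : Subgroup G) (hQ : IsPGroup p Q)
    (P : Sylow p G)
    (hP : ∃ S : Sylow p (Subgroup.normalizer (Q : Set G)),
      Subgroup.map (Subgroup.normalizer (Q : Set G)).subtype (S : Subgroup (Subgroup.normalizer (Q : Set G))) ≤ (P : Subgroup G))
    (R : Subgroup G) (hR : IsPGroup p R)
    (hQR : Q ⊔ (Subgroup.centralizer (Q : Set G) ⊓ (P : Subgroup G)) ≤ R) :
    IsPCentric p R := by
  haveI : Fact p.Prime := ⟨hp⟩
  refine ⟨hR, ?_⟩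
  intro x hx hxk
  set N := Subgroup.normalizer (Q : Set G) with hN
  set C := Subgroup.centralizer (Q : Set G) with hC
  obtain ⟨S, hS⟩ := hP
  set S' : Subgroup G := Subgroup.map N.subtype (S : Subgroup N) with hS'def
  -- basic containments
  have hQle : Q ≤ R := le_trans le_sup_left hQR
  have hCP : C ⊓ (P : Subgroup G) ≤ R := le_trans le_sup_right hQR
  have hxC : x ∈ C := by
    refine Subgroup.centralizer_le ?_ hx
    exact fun g hg => hQle hg
  -- the centralizer of `Q` is contained in the normalizer of `Q`
  have hCN : C ≤ N := by
    intro g hg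
    rw [Subgroup.mem_normalizer_iff]
    intro h
    constructor
    · intro hh
      have := Subgroup.mem_centralizer_iff.mp hg h hh
      have : g * h * g⁻¹ = h := by rw [← this]; group
      rw [this]; exact hh
    · intro hh
      have hc := Subgroup.mem_centralizer_iff.mp hg _ hh
      have heq : h = g * h * g⁻¹ := by
        have h2 : g * h = g * (g * h * g⁻¹) := by
          calc g * h = (g * h * g⁻¹) * g := by group
            _ = g * (g * h * g⁻¹) := hc
        exact mul_left_cancel h2
      rw [heq]; exact hh
  -- x conjugation fixes R pointwise
  have hxn : ∀ r ∈ R, x * r * x⁻¹ = r := by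
    intro r hr
    have := Subgroup.mem_centralizer_iff.mp hx r hr
    rw [← this]; group
  -- ⟨x⟩ is a p-group
  have hzp : IsPGroup p (Subgroup.zpowers x) := by
    obtain ⟨k, hk⟩ := hxk
    obtain ⟨m, _, hm⟩ := (Nat.dvd_prime_pow hp).mp (orderOf_dvd_of_pow_eq_one hk)
    exact IsPGroup.of_card (by rw [Nat.card_zpowers, hm])
  have hRC : IsPGroup p ((R ⊓ C : Subgroup G)) := hR.to_inf_left
  have hnorm : Subgroup.zpowers x ≤ Subgroup.normalizer ((R ⊓ C : Subgroup G) : Set G) := by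
    rw [Subgroup.zpowers_le]
    rw [Subgroup.mem_normalizer_iff]
    intro h
    constructor
    · rintro ⟨hhR, hhC⟩
      rw [hxn h hhR]
      exact ⟨hhR, hhC⟩
    · rintro ⟨hhR, hhC⟩
      have hxinv : x⁻¹ ∈ Subgroup.centralizer (R : Set G) := inv_mem hx
      have : x⁻¹ * (x * h * x⁻¹) * x⁻¹⁻¹ = x * h * x⁻¹ := by
        have := Subgroup.mem_centralizer_iff.mp hxinv _ hhR
        rw [← this]; group
      have hh : h = x⁻¹ * (x * h * x⁻¹) * x⁻¹⁻¹ := by group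
      rw [hh, this]
      exact ⟨hhR, hhC⟩
  set T : Subgroup G := Subgroup.zpowers x ⊔ (R ⊓ C) with hTdef
  have hTp : IsPGroup p T := IsPGroup.to_sup_of_normal_right' hzp hRC hnorm
  have hTC : T ≤ C := sup_le (Subgroup.zpowers_le.mpr hxC) inf_le_right
  have hTN : T ≤ N := hTC.trans hCN
  have hS'C_le_RC : S' ⊓ C ≤ R ⊓ C :=
    le_inf (le_trans (le_inf inf_le_right (le_trans inf_le_left hS)) hCP) inf_le_right
  have hS'C_le_T : S' ⊓ C ≤ T := hS'C_le_RC.trans le_sup_right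
  -- move to the normalizer
  haveI : (C.subgroupOf N).Normal := by
    rw [← Subgroup.normalizerMonoidHom_ker]
    exact MonoidHom.normal_ker _
  have hT0 : IsPGroup p (T.subgroupOf N) := by
    rw [← Subgroup.comap_subtype]
    exact hTp.comap_of_injective N.subtype Subtype.coe_injective
  have hT0C : T.subgroupOf N ≤ C.subgroupOf N := Subgroup.comap_mono hTC
  have hS0 : (S : Subgroup N) ⊓ C.subgroupOf N ≤ T.subgroupOf N := by
    have h1 : (S' ⊓ C).subgroupOf N ≤ T.subgroupOf N := Subgroup.comap_mono hS'C_le_T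
    have h2 : (S' ⊓ C).subgroupOf N = (S : Subgroup N) ⊓ C.subgroupOf N := by
      rw [← Subgroup.comap_subtype, ← Subgroup.comap_subtype, Subgroup.comap_inf, hS'def,
        Subgroup.comap_map_eq_self_of_injective N.subtype_injective, Subgroup.comap_subtype]
    rwa [h2] at h1
  have hfinal : T.subgroupOf N ≤ (S : Subgroup N) ⊓ C.subgroupOf N :=
    sylow_inf_le S (C.subgroupOf N) hT0 hT0C hS0
  -- conclude
  have hxT : x ∈ T := Subgroup.mem_sup_left (Subgroup.mem_zpowers x)
  have hy : (⟨x, hTN hxT⟩ : N) ∈ T.subgroupOf N := by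
    rw [Subgroup.mem_subgroupOf]; exact hxT
  have hy' := hfinal hy
  have hxS' : x ∈ S' := ⟨⟨x, hTN hxT⟩, hy'.1, rfl⟩
  have hxR : x ∈ R ⊓ C := hS'C_le_RC ⟨hxS', hxC⟩
  exact hxR.1
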